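/- Define a sequence of positive integers (a_m)_{m≥0} by a_{3k} = a_{3k+1} = 1 and a_{3k+2} = 2(k+1) for every k ≥ 0 (these are the continued fraction coefficients of e−1). Define q₋₁ = 0, q₀ = 1, q_m = a_m·q_{m−1} + q_{m−2} for m ≥ 1, and N_m = a₀ + a₁ + ⋯ + a_m. Then the limit lim_{m→∞} (log q_m)/(√(N_m) · log N_m) exists. -/

import Mathlib

/-- The continued fraction coefficients of `e - 1`:
`a_{3k} = a_{3k+1} = 1` and `a_{3k+2} = 2(k+1)`. -/
def aE (m : ℕ) : ℤ := if m % 3 = 2 then 2 * ((m : ℤ) / 3 + 1) else 1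

/-- Denominators of the convergents, shifted by one: `qConv a (m+1) = q_m`, with
`q₋₁ = 0`, `q₀ = 1`, `q_m = a_m q_{m-1} + q_{m-2}`. -/
def qConv (a : ℕ → ℤ) : ℕ → ℤ
  | 0 => 0
  | 1 => 1
  | n + 2 => a (n + 1) * qConv a (n + 1) + qConv a n

/-- `N_m = a₀ + a₁ + ⋯ + a_m`. -/
def Nsum (a : ℕ → ℤ) (m : ℕ) : ℤ := ∑ i ∈ Finset.range (m + 1), a i

open Filter Real

section IntSide

lemma aE_ge_one (m : ℕ) : 1 ≤ aE m := by
  unfold aE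
  split
  · have : (0:ℤ) ≤ (m:ℤ)/3 := Int.ediv_nonneg (by positivity) (by norm_num)
    linarith
  · exact le_refl _

lemma aE_0 (k : ℕ) : aE (3*k) = 1 := by
  unfold aE
  have h : (3*k) % 3 ≠ 2 := by omega
  simp [h]

lemma aE_1 (k : ℕ) : aE (3*k+1) = 1 := by
  unfold aE
  have h : (3*k+1) % 3 ≠ 2 := by omega
  simp [h]

lemma aE_2 (k : ℕ) : aE (3*k+2) = 2*((k:ℤ)+1) := by
  unfold aE
  have h : (3*k+2) % 3 = 2 := by omega
  simp only [h, if_true]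
  have h2 : ((3*k+2 : ℕ) : ℤ) = 3*(k:ℤ)+2 := by push_cast; ring
  rw [h2]
  omega

lemma q_nonneg : ∀ m, 0 ≤ qConv aE m
  | 0 => le_refl 0
  | 1 => zero_le_one
  | (n+2) => by
    have h1 := q_nonneg n
    have h2 := q_nonneg (n+1)
    have h3 := aE_ge_one (n+1)
    show 0 ≤ aE (n+1) * qConv aE (n+1) + qConv aE n
    nlinarith

lemma q_le_succ (m : ℕ) : qConv aE m ≤ qConv aE (m+1) := by
  cases m with
  | zero => exact zero_le_one
  | succ n =>
    have h1 := q_nonneg n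
    have h2 := q_nonneg (n+1)
    have h3 := aE_ge_one (n+1)
    show qConv aE (n+1) ≤ aE (n+1) * qConv aE (n+1) + qConv aE n
    nlinarith

lemma q_mono : Monotone (qConv aE) := monotone_nat_of_le_succ q_le_succ

lemma q_one_le (m : ℕ) : 1 ≤ qConv aE (m+1) := by
  have := q_mono (Nat.succ_le_succ (Nat.zero_le m))
  simpa [qConv] using this

lemma q3 : qConv aE 3 = 3 := by
  show aE 2 * qConv aE 2 + qConv aE 1 = 3
  show aE 2 * (aE 1 * qConv aE 1 + qConv aE 0) + qConv aE 1 = 3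
  have h2 : aE 2 = 2 := by norm_num [aE]
  have h1 : aE 1 = 1 := by norm_num [aE]
  simp [qConv, h1, h2]

lemma q_lower : ∀ k : ℕ, (2:ℤ)^(k+1) * (Nat.factorial (k+1) : ℤ) ≤ qConv aE (3*k+3) := by
  intro k
  induction k with
  | zero => simp [q3, Nat.factorial]
  | succ n ih =>
    have e1 : 3*(n+1)+3 = (3*n+4)+2 := by ring
    rw [e1]
    show (2:ℤ)^(n+2) * (Nat.factorial (n+2) : ℤ) ≤ aE (3*n+5) * qConv aE (3*n+5) + qConv aE (3*n+4)
    have ha : aE (3*n+5) = 2*((n:ℤ)+2) := by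
      rw [show 3*n+5 = 3*(n+1)+2 from by ring, aE_2 (n+1)]; push_cast; ring
    have hm : qConv aE (3*n+3) ≤ qConv aE (3*n+5) := q_mono (by omega)
    have h0 := q_nonneg (3*n+4)
    have hfact : (Nat.factorial (n+2) : ℤ) = ((n:ℤ)+2) * (Nat.factorial (n+1) : ℤ) := by
      rw [Nat.factorial_succ]; push_cast; ring
    have hpos : (0:ℤ) ≤ 2^(n+1) * (Nat.factorial (n+1) : ℤ) := by positivity
    rw [ha]
    calc (2:ℤ)^(n+2) * (Nat.factorial (n+2) : ℤ) = 2*((n:ℤ)+2) * (2^(n+1) * (Nat.factorial (n+1) : ℤ)) := by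
          rw [hfact]; ring
      _ ≤ 2*((n:ℤ)+2) * qConv aE (3*n+3) := by
          apply mul_le_mul_of_nonneg_left ih (by positivity)
      _ ≤ 2*((n:ℤ)+2) * qConv aE (3*n+5) + qConv aE (3*n+4) := by
          nlinarith [q_mono (show 3*n+3 ≤ 3*n+5 by omega), q_nonneg (3*n+3)]

lemma q_upper : ∀ k : ℕ, qConv aE (3*k+3) ≤ 8^k * (Nat.factorial (k+3) : ℤ) := by
  intro k
  induction k with
  | zero => simp [q3, Nat.factorial]
  | succ n ih =>
    have e1 : 3*(n+1)+3 = (3*n+4)+2 := by ring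
    rw [e1]
    show aE (3*n+5) * qConv aE (3*n+5) + qConv aE (3*n+4) ≤ 8^(n+1) * (Nat.factorial (n+4) : ℤ)
    have ha5 : aE (3*n+5) = 2*((n:ℤ)+2) := by
      rw [show 3*n+5 = 3*(n+1)+2 from by ring, aE_2 (n+1)]; push_cast; ring
    have ha4 : aE (3*n+4) = 1 := by rw [show 3*n+4 = 3*(n+1)+1 from by ring, aE_1 (n+1)]
    have ha3 : aE (3*n+3) = 1 := by rw [show 3*n+3 = 3*(n+1) from by ring, aE_0 (n+1)]
    have e5 : qConv aE (3*n+5) = aE (3*n+4) * qConv aE (3*n+4) + qConv aE (3*n+3) := rfl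
    have e4 : qConv aE (3*n+4) = aE (3*n+3) * qConv aE (3*n+3) + qConv aE (3*n+2) := rfl
    rw [ha4] at e5; rw [ha3] at e4
    have hm2 : qConv aE (3*n+2) ≤ qConv aE (3*n+3) := q_mono (by omega)
    have h3 := q_nonneg (3*n+3)
    have hfact : (Nat.factorial (n+4) : ℤ) = ((n:ℤ)+4) * (Nat.factorial (n+3) : ℤ) := by
      rw [Nat.factorial_succ]; push_cast; ring
    have hp : (0:ℤ) < 8^n := by positivity
    have hf3 : (0:ℤ) < (Nat.factorial (n+3) : ℤ) := by positivity
    rw [ha5, hfact, e5, e4]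
    have hA : 2*((n:ℤ)+2) * qConv aE (3*n+2) ≤ 2*((n:ℤ)+2) * qConv aE (3*n+3) :=
      mul_le_mul_of_nonneg_left hm2 (by positivity)
    have hB : (6*(n:ℤ)+14) * qConv aE (3*n+3) ≤ (6*(n:ℤ)+14) * (8^n * (Nat.factorial (n+3) : ℤ)) :=
      mul_le_mul_of_nonneg_left ih (by positivity)
    have hC : (0:ℤ) ≤ (2*(n:ℤ)+18) * (8^n * (Nat.factorial (n+3) : ℤ)) := by positivity
    push_cast at hA hB hC ⊢
    ring_nf at hA hB hC ⊢
    nlinarith [hA, hB, hC, hm2, q_nonneg (3*n+2)]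

lemma N_succ (m : ℕ) : Nsum aE (m+1) = Nsum aE m + aE (m+1) := by
  unfold Nsum; rw [Finset.sum_range_succ]

lemma N_formula : ∀ k : ℕ, Nsum aE (3*k+2) = ((k:ℤ)+1)*((k:ℤ)+4) := by
  intro k
  induction k with
  | zero =>
    show Nsum aE 2 = 5 - 1
    unfold Nsum
    rw [Finset.sum_range_succ, Finset.sum_range_succ, Finset.sum_range_one]
    have h0 : aE 0 = 1 := by norm_num [aE]
    have h1 : aE 1 = 1 := by norm_num [aE]
    have h2 : aE 2 = 2 := by norm_num [aE]
    rw [h0, h1, h2]; norm_num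
  | succ n ih =>
    have e1 : 3*(n+1)+2 = (3*n+4)+1 := by ring
    rw [e1, N_succ, show 3*n+4 = (3*n+3)+1 by ring, N_succ, show 3*n+3 = (3*n+2)+1 by ring, N_succ]
    have ha3 : aE (3*n+3) = 1 := by rw [show 3*n+3 = 3*(n+1) from by ring, aE_0 (n+1)]
    have ha4 : aE (3*n+4) = 1 := by rw [show 3*n+4 = 3*(n+1)+1 from by ring, aE_1 (n+1)]
    have ha5 : aE (3*n+5) = 2*((n:ℤ)+2) := by
      rw [show 3*n+5 = 3*(n+1)+2 from by ring, aE_2 (n+1)]; push_cast; ring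
    rw [ha3, ha4, ha5, ih]; push_cast; ring

lemma N_mono : Monotone (Nsum aE) := by
  apply monotone_nat_of_le_succ
  intro m
  rw [N_succ]
  have := aE_ge_one (m+1)
  linarith

lemma Q_lb (m : ℕ) (hk : 1 ≤ m/3) : (Nat.factorial (m/3) : ℤ) ≤ qConv aE (m+1) := by
  obtain ⟨j, hj⟩ : ∃ j, m/3 = j + 1 := ⟨m/3 - 1, by omega⟩
  rw [hj]
  have h1 := q_lower j
  have h2 : qConv aE (3*j+3) ≤ qConv aE (m+1) := q_mono (by omega)
  have h3 : (Nat.factorial (j+1) : ℤ) ≤ (2:ℤ)^(j+1) * (Nat.factorial (j+1) : ℤ) := by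
    have hf : (0:ℤ) < (Nat.factorial (j+1) : ℤ) := by positivity
    have : (1:ℤ) ≤ 2^(j+1) := by exact_mod_cast Nat.one_le_two_pow (n := j+1)
    nlinarith
  linarith

lemma Q_ub (m : ℕ) : qConv aE (m+1) ≤ 8^(m/3) * (Nat.factorial (m/3+3) : ℤ) := by
  have h2 : qConv aE (m+1) ≤ qConv aE (3*(m/3)+3) := q_mono (by omega)
  exact le_trans h2 (q_upper (m/3))

lemma N_lb (m : ℕ) (hk : 1 ≤ m/3) : ((m/3 : ℕ) : ℤ)^2 ≤ Nsum aE m := by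
  obtain ⟨j, hj⟩ : ∃ j, m/3 = j + 1 := ⟨m/3 - 1, by omega⟩
  rw [hj]
  have h1 := N_formula j
  have h2 : Nsum aE (3*j+2) ≤ Nsum aE m := N_mono (by omega)
  rw [h1] at h2
  push_cast
  nlinarith [h2]

lemma N_ub (m : ℕ) : Nsum aE m ≤ (((m/3 : ℕ) : ℤ)+4)^2 := by
  have h2 : Nsum aE m ≤ Nsum aE (3*(m/3)+2) := N_mono (by omega)
  have h1 := N_formula (m/3)
  rw [h1] at h2
  nlinarith [h2]

end IntSide

section RealSide

lemma pow_le_exp_mul_factorial : ∀ n : ℕ, (n:ℝ)^n ≤ Real.exp n * (Nat.factorial n : ℝ) := by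
  intro n
  induction n with
  | zero => simp
  | succ n ih =>
    have key : ((n:ℝ)+1)^n ≤ Real.exp 1 * (n:ℝ)^n := by
      rcases Nat.eq_zero_or_pos n with h | h
      · subst h; simpa using Real.one_le_exp zero_le_one
      · have hn : (0:ℝ) < n := by exact_mod_cast h
        have h1 : (n:ℝ) + 1 ≤ (n:ℝ) * Real.exp (1/(n:ℝ)) := by
          have := Real.add_one_le_exp (1/(n:ℝ))
          calc (n:ℝ) + 1 = (n:ℝ) * (1/(n:ℝ) + 1) := by field_simp; ring
            _ ≤ (n:ℝ) * Real.exp (1/(n:ℝ)) := by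
                apply mul_le_mul_of_nonneg_left this hn.le
        calc ((n:ℝ)+1)^n ≤ ((n:ℝ) * Real.exp (1/(n:ℝ)))^n := by
              apply pow_le_pow_left₀ (by positivity) h1
          _ = (n:ℝ)^n * Real.exp (1/(n:ℝ))^n := by rw [mul_pow]
          _ = (n:ℝ)^n * Real.exp 1 := by
              rw [← Real.exp_nat_mul]
              congr 1
              field_simp
          _ = Real.exp 1 * (n:ℝ)^n := by ring
    have hx : (0:ℝ) ≤ (n:ℝ)+1 := by positivity
    calc ((n+1:ℕ):ℝ)^(n+1) = ((n:ℝ)+1)^n * ((n:ℝ)+1) := by push_cast; ring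
      _ ≤ (Real.exp 1 * (n:ℝ)^n) * ((n:ℝ)+1) := by
          apply mul_le_mul_of_nonneg_right key hx
      _ ≤ (Real.exp 1 * (Real.exp n * (Nat.factorial n : ℝ))) * ((n:ℝ)+1) := by
          apply mul_le_mul_of_nonneg_right (mul_le_mul_of_nonneg_left ih (Real.exp_pos 1).le) hx
      _ = Real.exp ((n+1:ℕ):ℝ) * (Nat.factorial (n+1) : ℝ) := by
          rw [Nat.factorial_succ]
          push_cast
          rw [Real.exp_add]
          ring

lemma log_factorial_lb (n : ℕ) : (n:ℝ) * Real.log n - n ≤ Real.log (Nat.factorial n) := by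
  rcases Nat.eq_zero_or_pos n with h | h
  · subst h; simp
  have hn : (0:ℝ) < n := by exact_mod_cast h
  have hpow := pow_le_exp_mul_factorial n
  have hf : (0:ℝ) < (Nat.factorial n : ℝ) := by exact_mod_cast n.factorial_pos
  have hl := Real.log_le_log (by positivity : (0:ℝ) < (n:ℝ)^n) hpow
  rw [Real.log_pow, Real.log_mul (Real.exp_ne_zero _) hf.ne', Real.log_exp] at hl
  linarith

lemma log_factorial_ub (n : ℕ) : Real.log (Nat.factorial n) ≤ (n:ℝ) * Real.log n := by
  have h : (Nat.factorial n : ℝ) ≤ (n:ℝ)^n := by exact_mod_cast Nat.factorial_le_pow n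
  have hf : (0:ℝ) < (Nat.factorial n : ℝ) := by exact_mod_cast n.factorial_pos
  calc Real.log (Nat.factorial n) ≤ Real.log ((n:ℝ)^n) := Real.log_le_log hf h
    _ = (n:ℝ) * Real.log n := by rw [Real.log_pow]

lemma tendsto_nat_add_atTop (b : ℝ) : Tendsto (fun k : ℕ => (k:ℝ) + b) atTop atTop :=
  tendsto_atTop_add_const_right _ b tendsto_natCast_atTop_atTop

lemma H1 (a b : ℝ) : Tendsto (fun k : ℕ => ((k:ℝ) + a)/((k:ℝ) + b)) atTop (nhds 1) := by
  have h0 : Tendsto (fun k : ℕ => (a - b)/((k:ℝ) + b)) atTop (nhds 0) :=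
    Tendsto.div_atTop tendsto_const_nhds (tendsto_nat_add_atTop b)
  have h1 : Tendsto (fun k : ℕ => 1 + (a - b)/((k:ℝ) + b)) atTop (nhds 1) := by
    simpa using tendsto_const_nhds.add h0
  refine h1.congr' ?_
  filter_upwards [(tendsto_nat_add_atTop b).eventually_gt_atTop 0] with k hk
  field_simp
  ring

lemma H3 (c b : ℝ) : Tendsto (fun k : ℕ => c / Real.log ((k:ℝ) + b)) atTop (nhds 0) :=
  Tendsto.div_atTop tendsto_const_nhds (Real.tendsto_log_atTop.comp (tendsto_nat_add_atTop b))

lemma H2 (a b : ℝ) : Tendsto (fun k : ℕ => Real.log ((k:ℝ) + a)/Real.log ((k:ℝ) + b)) atTop (nhds 1) := by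
  have hq : Tendsto (fun k : ℕ => Real.log (((k:ℝ) + a)/((k:ℝ) + b))) atTop (nhds 0) := by
    have := (Real.continuousAt_log one_ne_zero).tendsto.comp (H1 a b)
    simpa [Function.comp_def] using this
  have h0 : Tendsto (fun k : ℕ => Real.log (((k:ℝ) + a)/((k:ℝ) + b)) / Real.log ((k:ℝ) + b)) atTop (nhds 0) :=
    Tendsto.div_atTop hq (Real.tendsto_log_atTop.comp (tendsto_nat_add_atTop b))
  have h1 : Tendsto (fun k : ℕ => Real.log (((k:ℝ) + a)/((k:ℝ) + b)) / Real.log ((k:ℝ) + b) + 1) atTop (nhds 1) := by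
    simpa using h0.add tendsto_const_nhds
  refine h1.congr' ?_
  filter_upwards [(tendsto_nat_add_atTop a).eventually_gt_atTop 0,
    (tendsto_nat_add_atTop b).eventually_gt_atTop 1] with k hka hkb
  have hlb : Real.log ((k:ℝ) + b) ≠ 0 := (Real.log_pos hkb).ne'
  rw [Real.log_div hka.ne' (by linarith)]
  field_simp
  ring

noncomputable def loF (k : ℕ) : ℝ := ((k:ℝ) * Real.log k - k) / (2 * ((k:ℝ)+4) * Real.log ((k:ℝ)+4))

noncomputable def hiF (k : ℕ) : ℝ := ((k:ℝ) * Real.log 8 + ((k:ℝ)+3) * Real.log ((k:ℝ)+3)) / (2 * (k:ℝ) * Real.log k)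

lemma lo_tendsto : Tendsto loF atTop (nhds (1/2)) := by
  have hmain : Tendsto (fun k : ℕ => (1/2) * (((k:ℝ)+0)/((k:ℝ)+4)) * (Real.log ((k:ℝ)+0)/Real.log ((k:ℝ)+4) - 1/Real.log ((k:ℝ)+4))) atTop (nhds ((1/2) * 1 * (1 - 0))) := by
    exact ((tendsto_const_nhds.mul (H1 0 4)).mul ((H2 0 4).sub (H3 1 4)))
  norm_num at hmain
  refine hmain.congr' ?_
  filter_upwards [eventually_gt_atTop 2] with k hk
  have hk1 : (1:ℝ) < (k:ℝ) := by exact_mod_cast Nat.lt_of_lt_of_le Nat.one_lt_two hk.le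
  have h4 : (1:ℝ) < (k:ℝ) + 4 := by linarith
  have hl4 : Real.log ((k:ℝ)+4) ≠ 0 := (Real.log_pos h4).ne'
  have hk4 : (k:ℝ) + 4 ≠ 0 := by linarith
  unfold loF
  field_simp

lemma hi_tendsto : Tendsto hiF atTop (nhds (1/2)) := by
  have hmain : Tendsto (fun k : ℕ => (1/2) * (Real.log 8/Real.log ((k:ℝ)+0)) + (1/2) * (((k:ℝ)+3)/((k:ℝ)+0)) * (Real.log ((k:ℝ)+3)/Real.log ((k:ℝ)+0))) atTop (nhds ((1/2) * 0 + (1/2) * 1 * 1)) := by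
    exact (tendsto_const_nhds.mul (H3 (Real.log 8) 0)).add ((tendsto_const_nhds.mul (H1 3 0)).mul (H2 3 0))
  norm_num at hmain
  refine hmain.congr' ?_
  filter_upwards [eventually_gt_atTop 2] with k hk
  have hk1 : (1:ℝ) < (k:ℝ) := by exact_mod_cast Nat.lt_of_lt_of_le Nat.one_lt_two hk.le
  have hl : Real.log (k:ℝ) ≠ 0 := (Real.log_pos hk1).ne'
  have hk0 : (k:ℝ) ≠ 0 := by linarith
  unfold hiF
  field_simp

end RealSide

theorem stmt15 :
    ∃ L : ℝ, Filter.Tendsto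
      (fun m : ℕ => Real.log ((qConv aE (m + 1) : ℤ) : ℝ) /
        (Real.sqrt ((Nsum aE m : ℤ) : ℝ) * Real.log ((Nsum aE m : ℤ) : ℝ)))
      Filter.atTop (nhds L) := by
  refine ⟨1/2, ?_⟩
  have hdiv : Tendsto (fun m : ℕ => m/3) atTop atTop := by
    apply tendsto_atTop_atTop.2
    intro b
    refine ⟨3*b, fun n hn => ?_⟩
    omega
  have hLO : Tendsto (fun m : ℕ => loF (m/3)) atTop (nhds (1/2)) := lo_tendsto.comp hdiv
  have hHI : Tendsto (fun m : ℕ => hiF (m/3)) atTop (nhds (1/2)) := hi_tendsto.comp hdiv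
  apply tendsto_of_tendsto_of_tendsto_of_le_of_le' hLO hHI
  all_goals {
    filter_upwards [eventually_ge_atTop 9] with m hm
    set k := m/3 with hkdef
    have hk3 : 3 ≤ k := by omega
    have hkR : (3:ℝ) ≤ (k:ℝ) := by exact_mod_cast hk3
    have hk1R : (1:ℝ) < (k:ℝ) := by linarith
    have hlogk : 0 < Real.log k := Real.log_pos hk1R
    -- numerator bounds
    set Q : ℝ := ((qConv aE (m + 1) : ℤ) : ℝ) with hQdef
    set N : ℝ := ((Nsum aE m : ℤ) : ℝ) with hNdef
    have hQ1 : (1:ℝ) ≤ Q := by rw [hQdef]; exact_mod_cast q_one_le m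
    have hQpos : (0:ℝ) < Q := by linarith
    have hnum0 : 0 ≤ Real.log Q := Real.log_nonneg hQ1
    have hQl : (Nat.factorial k : ℝ) ≤ Q := by rw [hQdef, hkdef]; exact_mod_cast Q_lb m (by omega)
    have hQu : Q ≤ 8^k * (Nat.factorial (k+3) : ℝ) := by rw [hQdef, hkdef]; exact_mod_cast Q_ub m
    have hfpos : (0:ℝ) < (Nat.factorial k : ℝ) := by exact_mod_cast k.factorial_pos
    have hnum_lb : (k:ℝ) * Real.log k - k ≤ Real.log Q :=
      le_trans (log_factorial_lb k) (Real.log_le_log hfpos hQl)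
    have hnum_ub : Real.log Q ≤ (k:ℝ) * Real.log 8 + ((k:ℝ)+3) * Real.log ((k:ℝ)+3) := by
      have h1 : Real.log Q ≤ Real.log (8^k * (Nat.factorial (k+3) : ℝ)) :=
        Real.log_le_log hQpos hQu
      have hf3pos : (0:ℝ) < (Nat.factorial (k+3) : ℝ) := by exact_mod_cast (k+3).factorial_pos
      rw [Real.log_mul (by positivity) hf3pos.ne', Real.log_pow] at h1
      have h2 := log_factorial_ub (k+3)
      have hc : ((k+3 : ℕ) : ℝ) = (k:ℝ) + 3 := by push_cast; ring
      rw [hc] at h2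
      calc Real.log Q ≤ (k:ℝ) * Real.log 8 + Real.log (Nat.factorial (k+3)) := by
            push_cast at h1 ⊢; linarith
        _ ≤ (k:ℝ) * Real.log 8 + ((k:ℝ)+3) * Real.log ((k:ℝ)+3) := by linarith
    -- denominator bounds
    have hNl : ((k:ℝ))^2 ≤ N := by
      rw [hNdef, hkdef]
      have h := N_lb m (by omega)
      calc ((m/3 : ℕ):ℝ)^2 = ((((m/3:ℕ):ℤ)^2 : ℤ) : ℝ) := by norm_cast
        _ ≤ ((Nsum aE m : ℤ) : ℝ) := by exact_mod_cast h
    have hNu : N ≤ ((k:ℝ)+4)^2 := by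
      rw [hNdef, hkdef]
      have h := N_ub m
      calc ((Nsum aE m : ℤ) : ℝ) ≤ (((((m/3:ℕ):ℤ)+4)^2 : ℤ) : ℝ) := by exact_mod_cast h
        _ = (((m/3:ℕ):ℝ)+4)^2 := by norm_cast
    have hNpos : (0:ℝ) < N := by nlinarith
    have hsql : (k:ℝ) ≤ Real.sqrt N := by
      rw [show (k:ℝ) = Real.sqrt ((k:ℝ)^2) from (Real.sqrt_sq (by positivity)).symm]
      exact Real.sqrt_le_sqrt hNl
    have hsqu : Real.sqrt N ≤ (k:ℝ)+4 := by
      rw [show (k:ℝ)+4 = Real.sqrt (((k:ℝ)+4)^2) from (Real.sqrt_sq (by positivity)).symm]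
      exact Real.sqrt_le_sqrt hNu
    have hlogNl : 2 * Real.log k ≤ Real.log N := by
      have := Real.log_le_log (by positivity : (0:ℝ) < ((k:ℝ))^2) hNl
      rw [Real.log_pow] at this
      push_cast at this
      linarith
    have hlogNu : Real.log N ≤ 2 * Real.log ((k:ℝ)+4) := by
      have := Real.log_le_log hNpos hNu
      rw [Real.log_pow] at this
      push_cast at this
      linarith
    have hlogN0 : 0 ≤ Real.log N := by linarith
    have hden_lb : 2 * (k:ℝ) * Real.log k ≤ Real.sqrt N * Real.log N := by
      calc 2 * (k:ℝ) * Real.log k = (k:ℝ) * (2 * Real.log k) := by ring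
        _ ≤ Real.sqrt N * Real.log N := by
            apply mul_le_mul hsql hlogNl (by positivity) (Real.sqrt_nonneg N)
    have hden_ub : Real.sqrt N * Real.log N ≤ 2 * ((k:ℝ)+4) * Real.log ((k:ℝ)+4) := by
      calc Real.sqrt N * Real.log N ≤ ((k:ℝ)+4) * (2 * Real.log ((k:ℝ)+4)) := by
            apply mul_le_mul hsqu hlogNu hlogN0 (by positivity)
        _ = 2 * ((k:ℝ)+4) * Real.log ((k:ℝ)+4) := by ring
    have hden_lb_pos : (0:ℝ) < 2 * (k:ℝ) * Real.log k := by positivity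
    have hden_pos : (0:ℝ) < Real.sqrt N * Real.log N := lt_of_lt_of_le hden_lb_pos hden_lb
    have h8 : 0 ≤ Real.log 8 := Real.log_nonneg (by norm_num)
    have h3' : 0 ≤ Real.log ((k:ℝ)+3) := Real.log_nonneg (by linarith)
    have hnumub0 : 0 ≤ (k:ℝ) * Real.log 8 + ((k:ℝ)+3) * Real.log ((k:ℝ)+3) :=
      add_nonneg (mul_nonneg (by positivity) h8) (mul_nonneg (by positivity) h3')
    first
      | exact div_le_div₀ hnum0 hnum_lb hden_pos hden_ub
      | exact div_le_div₀ hnumub0 hnum_ub hden_lb_pos hden_lb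
  }
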